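/- arXiv:1305.1920 — 3 statements merged into one kernel-verified Lean document; each statement's English description precedes it below -/
import Mathlib

section
/- Let μ₁, …, μₙ be non-atomic compactly supported probability measures on ℂ with product measure μ on ℂⁿ, and let A be an ℓ × ℓ matrix of polynomials in n variables. Then the integral ∫ rank(A(t)) dμ(t) is a nonnegative integer. -/
open MeasureTheory

namespace Stmt3Aux

open MvPolynomial Matrix


lemma meas_eval {m : ℕ} (p : MvPolynomial (Fin m) ℂ) :
    Measurable fun x : Fin m → ℂ => MvPolynomial.eval x p := by
  induction p using MvPolynomial.induction_on with
  | C a => simpa using measurable_const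
  | add p q hp hq => simpa [Pi.add_def] using hp.add hq
  | mul_X p i hp => simpa [Pi.mul_def] using hp.mul (measurable_pi_apply i)

lemma poly_null : ∀ (n : ℕ) (μ : Fin n → Measure ℂ), (∀ j, IsProbabilityMeasure (μ j)) →
    (∀ j (t : ℂ), μ j {t} = 0) → ∀ (p : MvPolynomial (Fin n) ℂ), p ≠ 0 →
    Measure.pi μ {x | MvPolynomial.eval x p = 0} = 0 := by
  intro n
  induction n with
  | zero =>
    intro μ _ _ p hp
    obtain ⟨a, rfl⟩ := MvPolynomial.C_surjective (Fin 0) p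
    have ha : a ≠ 0 := fun h => hp (by simp [h])
    have hempty : {x : Fin 0 → ℂ | MvPolynomial.eval x (MvPolynomial.C a) = 0} = ∅ := by
      ext x; simp [ha]
    rw [hempty]; exact measure_empty
  | succ n IH =>
    intro μ hprob hna p hp
    haveI := hprob
    have hmp := (meas_eval p) (measurableSet_singleton (0:ℂ))
    -- the measurable equiv
    set e := MeasurableEquiv.piFinSuccAbove (fun _ : Fin (n+1) => ℂ) 0 with he
    set ν := Measure.pi (fun j : Fin n => μ ((0:Fin (n+1)).succAbove j)) with hν
    haveI : ∀ j : Fin n, IsProbabilityMeasure ((fun j : Fin n => μ ((0:Fin (n+1)).succAbove j)) j) :=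
      fun j => hprob _
    have hmpres := measurePreserving_piFinSuccAbove μ 0
    set T : Set (ℂ × (Fin n → ℂ)) :=
      {q | MvPolynomial.eval (Fin.cons q.1 q.2 : Fin (n+1) → ℂ) p = 0} with hT
    have hTmeas : MeasurableSet T := by
      have : Measurable fun q : ℂ × (Fin n → ℂ) =>
          MvPolynomial.eval (Fin.cons q.1 q.2 : Fin (n+1) → ℂ) p := by
        apply (meas_eval p).comp
        apply measurable_pi_iff.2
        intro i
        refine Fin.cases ?_ ?_ i
        · simpa using measurable_fst
        · intro j; simpa [Function.comp_def] using (measurable_pi_apply j).comp measurable_snd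
      exact this (measurableSet_singleton 0)
    have hpre : {x : Fin (n+1) → ℂ | MvPolynomial.eval x p = 0} = e ⁻¹' T := by
      ext x
      have hex : e x = (x 0, fun j => x ((0:Fin (n+1)).succAbove j)) := rfl
      simp only [Set.mem_setOf_eq, Set.mem_preimage, hT, hex]
      have hcons : (Fin.cons (x 0) (fun j => x ((0:Fin (n+1)).succAbove j)) : Fin (n+1) → ℂ) = x := by
        ext i
        refine Fin.cases ?_ ?_ i
        · simp
        · intro j; simp [Fin.succAbove]
      rw [hcons]
    have hkey := MeasureTheory.MeasurePreserving.measure_preimage hmpres hTmeas.nullMeasurableSet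
    rw [hpre, hkey]
    -- now swap
    have hswap : ((μ 0).prod ν) T = (ν.prod (μ 0)) (Prod.swap ⁻¹' T) := by
      rw [← MeasureTheory.Measure.prod_swap]
      rw [MeasureTheory.Measure.map_apply measurable_swap hTmeas]
    rw [hswap]
    have hTmeas' : MeasurableSet (Prod.swap ⁻¹' T : Set ((Fin n → ℂ) × ℂ)) :=
      hTmeas.preimage measurable_swap
    rw [MeasureTheory.Measure.measure_prod_null hTmeas']
    -- q := finSuccEquiv of p
    set q := MvPolynomial.finSuccEquiv ℂ n p with hq
    have hq0 : q ≠ 0 := by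
      intro h
      apply hp
      have := (MvPolynomial.finSuccEquiv ℂ n).injective (a₁ := p) (a₂ := 0)
      exact this (by simp [← hq, h])
    obtain ⟨k, hk⟩ : ∃ k, q.coeff k ≠ 0 := by
      by_contra h
      push_neg at h
      exact hq0 (Polynomial.ext fun k => by simp [h k])
    have hcoeffnull : ν {y | MvPolynomial.eval y (q.coeff k) = 0} = 0 :=
      IH _ (fun j => hprob _) (fun j t => hna _ t) _ hk
    have : ∀ᵐ y ∂ν, MvPolynomial.eval y (q.coeff k) ≠ 0 := by
      rw [ae_iff]
      simpa using hcoeffnull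
    filter_upwards [this] with y hy
    have hqy : q.map (MvPolynomial.eval y) ≠ 0 := by
      intro h
      apply hy
      have := congrArg (fun r => Polynomial.coeff r k) h
      simpa using this
    have hslice : (Prod.mk y ⁻¹' (Prod.swap ⁻¹' T)) =
        {a : ℂ | Polynomial.IsRoot (q.map (MvPolynomial.eval y)) a} := by
      ext a
      simp only [Set.mem_preimage, Set.mem_setOf_eq, hT, Prod.swap]
      rw [MvPolynomial.eval_eq_eval_mv_eval']
      rfl
    haveI : NullSingletonClass (μ 0) := ⟨fun t => hna 0 t⟩
    simp only [hslice]
    exact Set.Finite.measure_zero (Polynomial.finite_setOf_isRoot hqy) (μ 0)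

set_option maxHeartbeats 2000000 in

lemma generic_rank {n ℓ : ℕ} (A : Matrix (Fin ℓ) (Fin ℓ) (MvPolynomial (Fin n) ℂ)) :
    ∃ (r : ℕ) (p : MvPolynomial (Fin n) ℂ), p ≠ 0 ∧
      ∀ x : Fin n → ℂ, MvPolynomial.eval x p ≠ 0 →
        (A.map (MvPolynomial.eval x)).rank = r := by
  classical
  set K := FractionRing (MvPolynomial (Fin n) ℂ) with hK
  set e : (MvPolynomial (Fin n) ℂ) →+* K := algebraMap (MvPolynomial (Fin n) ℂ) K with he_def
  have he : Function.Injective e := IsFractionRing.injective (MvPolynomial (Fin n) ℂ) K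
  set B : Matrix (Fin ℓ) (Fin ℓ) K := A.map e with hB
  set v : Fin ℓ → (Fin ℓ → K) := fun j i => B i j with hv
  obtain ⟨t, hts, hspan, hind⟩ := exists_linearIndependent K (Set.range v)
  haveI : Fintype ↥t := ((Set.finite_range v).subset hts).fintype
  set f : ↥t → Fin ℓ := fun y => (hts y.2).choose with hf_def
  have hf : ∀ y : ↥t, v (f y) = (y : Fin ℓ → K) := fun y => (hts y.2).choose_spec
  set r := Fintype.card ↥t with hr
  set M : Matrix (Fin ℓ) ↥t (MvPolynomial (Fin n) ℂ) := Matrix.of fun i y => A i (f y) with hM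
  set MK : Matrix (Fin ℓ) ↥t K := M.map e with hMK
  have hMKcol : ∀ (i : Fin ℓ) (y : ↥t), MK i y = (y : Fin ℓ → K) i := by
    intro i y
    rw [← hf y]
    rfl
  -- left inverse from independence
  have hker : LinearMap.ker (Matrix.toLin' MK) = ⊥ := by
    rw [LinearMap.ker_eq_bot']
    intro c hc
    have hsum : ∑ y : ↥t, c y • (y : Fin ℓ → K) = 0 := by
      funext i
      have := congrFun hc i
      simp only [Matrix.toLin'_apply, Matrix.mulVec, dotProduct] at this
      simpa [Finset.sum_apply, hMKcol, mul_comm] using this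
    funext y
    exact Fintype.linearIndependent_iff.1 hind c hsum y
  obtain ⟨g, hg⟩ := LinearMap.exists_leftInverse_of_injective (Matrix.toLin' MK) hker
  set C : Matrix ↥t (Fin ℓ) K := LinearMap.toMatrix' g with hC_def
  have hC : C * MK = 1 := by
    have h2 := congrArg LinearMap.toMatrix' hg
    rwa [LinearMap.toMatrix'_comp, LinearMap.toMatrix'_toLin', LinearMap.toMatrix'_id] at h2
  -- spanning coefficients
  have hmem : ∀ j, v j ∈ Submodule.span K (Set.range ((↑) : ↥t → (Fin ℓ → K))) := by
    intro j
    rw [Subtype.range_coe, hspan]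
    exact Submodule.subset_span (Set.mem_range_self j)
  have hmem' : ∀ j, ∃ c : ↥t → K, ∑ y, c y • (y : Fin ℓ → K) = v j := by
    intro j
    exact (Submodule.mem_span_range_iff_exists_fun K).1 (hmem j)
  choose Dc hDc using hmem'
  set DM : Matrix ↥t (Fin ℓ) K := Matrix.of fun y j => Dc j y with hDM_def
  have hDM : MK * DM = B := by
    ext i j
    have := congrFun (hDc j) i
    simp only [Finset.sum_apply, Pi.smul_apply, smul_eq_mul] at this
    simp only [Matrix.mul_apply, hDM_def, Matrix.of_apply, hMKcol]
    rw [show B i j = v j i from rfl, ← this]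
    exact Finset.sum_congr rfl fun y _ => mul_comm _ _
  -- common denominator
  set F : (↥t × Fin ℓ) ⊕ (↥t × Fin ℓ) → K :=
    Sum.elim (fun yj => C yj.1 yj.2) (fun yj => DM yj.1 yj.2) with hF
  obtain ⟨b, hb⟩ := IsLocalization.exist_integer_multiples_of_finite (nonZeroDivisors (MvPolynomial (Fin n) ℂ)) F
  set d : (MvPolynomial (Fin n) ℂ) := (b : (MvPolynomial (Fin n) ℂ)) with hd_def
  have hd : d ≠ 0 := nonZeroDivisors.ne_zero b.2
  have hbC : ∀ (y : ↥t) (j : Fin ℓ), ∃ c : (MvPolynomial (Fin n) ℂ), e c = e d * C y j := by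
    intro y j
    obtain ⟨c, hc⟩ := hb (Sum.inl (y, j))
    exact ⟨c, by rw [hc]; simp [hF, Algebra.smul_def, he_def]⟩
  have hbD : ∀ (y : ↥t) (j : Fin ℓ), ∃ c : (MvPolynomial (Fin n) ℂ), e c = e d * DM y j := by
    intro y j
    obtain ⟨c, hc⟩ := hb (Sum.inr (y, j))
    exact ⟨c, by rw [hc]; simp [hF, Algebra.smul_def, he_def]⟩
  choose C' hC' using fun y j => hbC y j
  choose D' hD' using fun y j => hbD y j
  -- identities over (MvPolynomial (Fin n) ℂ)
  have hCM : (Matrix.of C') * M = d • (1 : Matrix ↥t ↥t (MvPolynomial (Fin n) ℂ)) := by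
    refine Matrix.ext fun y z => ?_
    apply he
    have lhs : e (((Matrix.of C') * M) y z) = e d * (C * MK) y z := by
      simp only [Matrix.mul_apply, map_sum, _root_.map_mul, Matrix.of_apply, Matrix.map_apply, hMK, hM]
      rw [Finset.mul_sum]
      refine Finset.sum_congr rfl fun j _ => ?_
      rw [show e (C' y j) = e d * C y j from hC' y j]
      ring
    rw [lhs, hC]
    simp only [Matrix.smul_apply, Matrix.one_apply, smul_eq_mul]
    by_cases hyz : y = z <;> simp [hyz]
  have hMD : M * (Matrix.of D') = d • A := by
    refine Matrix.ext fun i j => ?_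
    apply he
    have lhs : e ((M * (Matrix.of D')) i j) = e d * (MK * DM) i j := by
      simp only [Matrix.mul_apply, map_sum, _root_.map_mul, Matrix.of_apply, Matrix.map_apply, hMK, hM, hDM_def]
      rw [Finset.mul_sum]
      refine Finset.sum_congr rfl fun y _ => ?_
      rw [show e (D' y j) = e d * DM y j from hD' y j]
      simp only [hDM_def, Matrix.of_apply]
      ring
    rw [lhs, hDM]
    simp only [Matrix.smul_apply, smul_eq_mul, _root_.map_mul]
    rfl
  -- conclusion
  refine ⟨r, d, hd, fun x hx => ?_⟩
  set φ : (MvPolynomial (Fin n) ℂ) →+* ℂ := (MvPolynomial.eval x : (MvPolynomial (Fin n) ℂ) →+* ℂ) with hφ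
  set Ax : Matrix (Fin ℓ) (Fin ℓ) ℂ := A.map φ with hAx
  set Mx : Matrix (Fin ℓ) ↥t ℂ := M.map φ with hMx
  have hmapmul : ∀ {α β γ : Type} [inst : Fintype β] (X : Matrix α β (MvPolynomial (Fin n) ℂ)) (Y : Matrix β γ (MvPolynomial (Fin n) ℂ)),
      (X * Y).map φ = X.map φ * Y.map φ := by
    intro α β γ _ X Y
    ext i j
    simp [Matrix.mul_apply, map_sum]
  have hCMx : (Matrix.of C').map φ * Mx = (φ d) • (1 : Matrix ↥t ↥t ℂ) := by
    rw [hMx, ← hmapmul, hCM]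
    ext y z
    simp only [Matrix.map_apply, Matrix.smul_apply, Matrix.one_apply, smul_eq_mul]
    by_cases hyz : y = z <;> simp [hyz]
  have hMDx : Mx * (Matrix.of D').map φ = (φ d) • Ax := by
    rw [hMx, hAx, ← hmapmul, hMD]
    ext i j
    simp [Matrix.map_apply, Matrix.smul_apply, smul_eq_mul]
  -- lower bound
  have hlow : r ≤ Ax.rank := by
    have h1 : ((φ d)⁻¹ • (Matrix.of C').map φ) * Mx = (1 : Matrix ↥t ↥t ℂ) := by
      rw [Matrix.smul_mul, hCMx, smul_smul, inv_mul_cancel₀ hx, one_smul]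
    have h2 : (1 : Matrix ↥t ↥t ℂ).rank = r := by
      rw [Matrix.rank_one]
    have h3 : (1 : Matrix ↥t ↥t ℂ).rank ≤ Mx.rank := by
      rw [← h1]; exact Matrix.rank_mul_le_right _ _
    have h4 : Mx = Ax * ((1 : Matrix (Fin ℓ) (Fin ℓ) ℂ).submatrix (Equiv.refl _) f) := by
      rw [Matrix.mul_submatrix_one]
      rfl
    have h5 : Mx.rank ≤ Ax.rank := by
      rw [h4]; exact Matrix.rank_mul_le_left _ _
    omega
  have hup : Ax.rank ≤ r := by
    have h1 : ((φ d) • Ax).rank = Ax.rank := by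
      have hdet : IsUnit ((φ d • (1 : Matrix (Fin ℓ) (Fin ℓ) ℂ)).det) := by
        rw [Matrix.det_smul, Matrix.det_one, mul_one]
        exact isUnit_iff_ne_zero.2 (pow_ne_zero _ hx)
      have : (φ d • (1 : Matrix (Fin ℓ) (Fin ℓ) ℂ)) * Ax = φ d • Ax := by
        rw [Matrix.smul_mul, one_mul]
      rw [← this]
      exact Matrix.rank_mul_eq_right_of_isUnit_det _ _ hdet
    have h2 : ((φ d) • Ax).rank ≤ Mx.rank := by
      rw [← hMDx]; exact Matrix.rank_mul_le_left _ _
    have h3 : Mx.rank ≤ r := by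
      rw [hr]; exact Matrix.rank_le_card_width Mx
    omega
  exact le_antisymm hup hlow

end Stmt3Aux

/-- In the setting of non-atomic compactly supported probability measures on `ℂ`
with product measure `μ`, and a matrix `A` of polynomials, the integral of the rank of the
evaluated matrix is a nonnegative integer. -/
theorem stmt3 (n ℓ : ℕ) (μ : Fin n → Measure ℂ) [∀ j, IsProbabilityMeasure (μ j)]
    (hcpt : ∀ j, ∃ R : ℝ, μ j {z : ℂ | R < ‖z‖} = 0)
    (hna : ∀ j (t : ℂ), μ j {t} = 0)
    (A : Matrix (Fin ℓ) (Fin ℓ) (MvPolynomial (Fin n) ℂ)) :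
    ∃ r : ℕ, ∫ x, ((A.map (MvPolynomial.eval x)).rank : ℝ) ∂(Measure.pi μ) = (r : ℝ) := by
  obtain ⟨r, p, hp, hrank⟩ := Stmt3Aux.generic_rank A
  refine ⟨r, ?_⟩
  have hnull : Measure.pi μ {x | MvPolynomial.eval x p = 0} = 0 :=
    Stmt3Aux.poly_null n μ (fun j => inferInstance) hna p hp
  have hae : (fun x => ((A.map (MvPolynomial.eval x)).rank : ℝ)) =ᵐ[Measure.pi μ]
      (fun _ => (r : ℝ)) := by
    rw [Filter.eventuallyEq_iff_exists_mem]
    refine ⟨{x | MvPolynomial.eval x p ≠ 0}, ?_, fun x hx => by simp [hrank x hx]⟩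
    rw [mem_ae_iff]
    have hc : {x : Fin n → ℂ | ¬ MvPolynomial.eval x p = 0}ᶜ = {x | MvPolynomial.eval x p = 0} := by
      ext x; simp
    rw [hc]
    exact hnull
  rw [integral_congr_ae hae, integral_const]
  simp
end

section
/- Let A be a positive operator in a finite von Neumann algebra M with faithful normal tracial state τ, and let F_A(t) = τ(E_A(t)) be its spectral density function, where E_A(t) is the spectral projection of A onto (−∞, t]. If the Novikov–Shubin invariant α(A) is nonzero (possibly ∞ or ∞⁺), then lim_{ε→0⁺} ∫_ε^{‖A‖} (F_A(t) − F_A(0))/t dt < ∞. -/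
open MeasureTheory Filter

/-- Auxiliary: from the Novikov–Shubin hypothesis we extract a power bound near `0⁺`. -/
theorem stmt11_key (F : ℝ → ℝ) (hmono : Monotone F) (h0F : ∀ t, 0 ≤ F t)
    (hα : (∃ t > (0 : ℝ), F t = F 0) ∨
      (0 : EReal) < Filter.liminf
        (fun t : ℝ => ((Real.log (F t - F 0) / Real.log t : ℝ) : EReal))
        (nhdsWithin 0 (Set.Ioi 0))) :
    ∃ c > (0 : ℝ), ∃ δ > (0 : ℝ), δ < 1 ∧
      ∀ t ∈ Set.Ioc (0 : ℝ) δ, F t - F 0 ≤ t ^ c := by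
  rcases hα with ⟨t₀, ht₀, hFt₀⟩ | hlim
  · refine ⟨1, one_pos, min t₀ (1/2), lt_min ht₀ (by norm_num), ?_, ?_⟩
    · exact lt_of_le_of_lt (min_le_right _ _) (by norm_num)
    · intro t ht
      have h1 : F t ≤ F t₀ := hmono (le_trans ht.2 (min_le_left _ _))
      have h2 : F 0 ≤ F t := hmono ht.1.le
      have : F t - F 0 ≤ 0 := by rw [← hFt₀] at h2 ⊢; linarith
      calc F t - F 0 ≤ 0 := this
        _ ≤ t ^ (1 : ℝ) := (Real.rpow_pos_of_pos ht.1 1).le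
  · obtain ⟨c, hc0, hclt⟩ := EReal.exists_between_coe_real hlim
    have hc : (0 : ℝ) < c := by exact_mod_cast hc0
    have hev : ∀ᶠ t in nhdsWithin (0:ℝ) (Set.Ioi 0),
        (c : EReal) < ((Real.log (F t - F 0) / Real.log t : ℝ) : EReal) :=
      Filter.eventually_lt_of_lt_liminf hclt
    rw [eventually_iff, mem_nhdsGT_iff_exists_Ioo_subset] at hev
    obtain ⟨u, hu, hsub⟩ := hev
    have hu0 : (0:ℝ) < u := hu
    refine ⟨c, hc, min (u/2) (1/2), lt_min (by linarith) (by norm_num),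
      lt_of_le_of_lt (min_le_right _ _) (by norm_num), ?_⟩
    intro t ht
    have ht0 : 0 < t := ht.1
    have htu : t < u := lt_of_le_of_lt (le_trans ht.2 (min_le_left _ _)) (by linarith)
    have ht1 : t < 1 := lt_of_le_of_lt (le_trans ht.2 (min_le_right _ _)) (by norm_num)
    have hmem : t ∈ {x | (c : EReal) < ((Real.log (F x - F 0) / Real.log x : ℝ) : EReal)} :=
      hsub ⟨ht0, htu⟩
    have hlt : c < Real.log (F t - F 0) / Real.log t := by exact_mod_cast hmem
    have hlogt : Real.log t < 0 := Real.log_neg ht0 ht1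
    have hlog : Real.log (F t - F 0) < c * Real.log t :=
      (lt_div_iff_of_neg hlogt).mp hlt
    by_cases hG : F t - F 0 ≤ 0
    · exact le_trans hG (Real.rpow_pos_of_pos ht0 c).le
    · push_neg at hG
      refine le_of_lt ?_
      have : Real.log (F t - F 0) < Real.log (t ^ c) := by
        rwa [Real.log_rpow ht0]
      calc F t - F 0 = Real.exp (Real.log (F t - F 0)) := (Real.exp_log hG).symm
        _ < Real.exp (Real.log (t ^ c)) := Real.exp_lt_exp.mpr this
        _ = t ^ c := Real.exp_log (Real.rpow_pos_of_pos ht0 c)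

/-- Let `F = F_A` be the spectral density function of a positive operator `A`
(with `a = ‖A‖`): a nondecreasing, right-continuous function with values in `[0,1]`.  If the
Novikov–Shubin invariant `α(A)` is nonzero — i.e. either `F` is constant near `0⁺` (the `∞⁺`
case) or `liminf_{t→0⁺} ln(F(t) − F(0))/ln t > 0` — then
`lim_{ε→0⁺} ∫_ε^a (F(t) − F(0))/t dt` exists and is finite. -/
theorem stmt11 (a : ℝ) (ha : 0 < a) (F : ℝ → ℝ)
    (hmono : Monotone F)
    (hrc : ∀ t : ℝ, ContinuousWithinAt F (Set.Ici t) t)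
    (h0F : ∀ t, 0 ≤ F t) (hF1 : ∀ t, F t ≤ 1)
    (hα : (∃ t > (0 : ℝ), F t = F 0) ∨
      (0 : EReal) < Filter.liminf
        (fun t : ℝ => ((Real.log (F t - F 0) / Real.log t : ℝ) : EReal))
        (nhdsWithin 0 (Set.Ioi 0))) :
    ∃ L : ℝ, Filter.Tendsto (fun ε : ℝ => ∫ t in Set.Ioc ε a, (F t - F 0) / t)
      (nhdsWithin 0 (Set.Ioi 0)) (nhds L) := by
  obtain ⟨c, hc, δ, hδ, hδ1, hbound⟩ := stmt11_key F hmono h0F hα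
  set g : ℝ → ℝ := fun t => (F t - F 0) / t with hg
  have hgmeas : Measurable g :=
    (hmono.measurable.sub measurable_const).div measurable_id
  -- integrability on `Ioc 0 δ`
  have hint1 : IntegrableOn g (Set.Ioc 0 δ) := by
    have hrpow : IntegrableOn (fun t : ℝ => t ^ (c - 1)) (Set.Ioc 0 δ) := by
      have := (intervalIntegral.intervalIntegrable_rpow' (a := 0) (b := δ)
        (r := c - 1) (by linarith))
      rwa [intervalIntegrable_iff, Set.uIoc_of_le hδ.le] at this
    refine Integrable.mono' hrpow (hgmeas.aestronglyMeasurable) ?_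
    rw [ae_restrict_iff' measurableSet_Ioc]
    filter_upwards with t ht
    have ht0 : 0 < t := ht.1
    have hF0 : F 0 ≤ F t := hmono ht0.le
    have h1 : ‖g t‖ = (F t - F 0) / t := by
      rw [Real.norm_eq_abs, abs_of_nonneg (div_nonneg (by linarith) ht0.le)]
    rw [h1]
    calc (F t - F 0) / t ≤ t ^ c / t := by
          apply div_le_div_of_nonneg_right (hbound t ht) ht0.le
        _ = t ^ (c - 1) := by
          rw [Real.rpow_sub ht0, Real.rpow_one]
  -- integrability on `Ioc δ a`
  have hint2 : IntegrableOn g (Set.Ioc δ a) := by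
    refine Integrable.mono' (g := fun _ => 1 / δ)
      (integrableOn_const measure_Ioc_lt_top.ne)
      (hgmeas.aestronglyMeasurable) ?_
    rw [ae_restrict_iff' measurableSet_Ioc]
    filter_upwards with t ht
    have ht0 : 0 < t := lt_trans hδ ht.1
    have hF0 : F 0 ≤ F t := hmono ht0.le
    have h1 : ‖g t‖ = (F t - F 0) / t := by
      rw [Real.norm_eq_abs, abs_of_nonneg (div_nonneg (by linarith) ht0.le)]
    rw [h1]
    exact div_le_div₀ (by linarith) (by linarith [hF1 t, h0F 0]) hδ ht.1.le
  -- integrability on `Ioc 0 a`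
  have hintA : IntegrableOn g (Set.Ioc 0 a) := by
    refine (hint1.union hint2).mono_set ?_
    intro t ht
    rcases le_or_gt t δ with h | h
    · exact Or.inl ⟨ht.1, h⟩
    · exact Or.inr ⟨h, ht.2⟩
  set μ := (volume : Measure ℝ).restrict (Set.Ioc (0:ℝ) a) with hμ
  have hIμ : Integrable g μ := hintA
  -- the small integrals tend to zero
  have hsmeas : Tendsto (fun ε : ℝ => μ (Set.Ioc 0 ε)) (nhdsWithin 0 (Set.Ioi 0)) (nhds 0) := by
    have hub : Tendsto (fun ε : ℝ => ENNReal.ofReal ε) (nhdsWithin 0 (Set.Ioi 0)) (nhds 0) := by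
      have : Tendsto (fun ε : ℝ => ε) (nhdsWithin 0 (Set.Ioi 0)) (nhds 0) :=
        tendsto_id.mono_left nhdsWithin_le_nhds
      simpa using (ENNReal.tendsto_ofReal this)
    refine tendsto_of_tendsto_of_tendsto_of_le_of_le tendsto_const_nhds hub
      (fun ε => zero_le) ?_
    intro ε
    calc μ (Set.Ioc 0 ε) ≤ volume (Set.Ioc (0:ℝ) ε) :=
          Measure.restrict_le_self _
      _ = ENNReal.ofReal (ε - 0) := Real.volume_Ioc
      _ = ENNReal.ofReal ε := by norm_num
  have hsmall : Tendsto (fun ε : ℝ => ∫ t in Set.Ioc 0 ε, g t ∂μ)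
      (nhdsWithin 0 (Set.Ioi 0)) (nhds 0) :=
    hIμ.tendsto_setIntegral_nhds_zero hsmeas
  refine ⟨∫ t in Set.Ioc 0 a, g t, ?_⟩
  have heq : ∀ᶠ ε in nhdsWithin (0:ℝ) (Set.Ioi 0),
      (∫ t in Set.Ioc ε a, g t) =
        (∫ t in Set.Ioc 0 a, g t) - ∫ t in Set.Ioc 0 ε, g t ∂μ := by
    filter_upwards [Ioo_mem_nhdsGT_of_mem (⟨le_refl 0, ha⟩ : (0:ℝ) ∈ Set.Ico 0 a)]
      with ε hε
    have hε0 : 0 < ε := hε.1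
    have hεa : ε < a := hε.2
    have hres : ∫ t in Set.Ioc 0 ε, g t ∂μ = ∫ t in Set.Ioc 0 ε, g t := by
      rw [hμ, Measure.restrict_restrict measurableSet_Ioc,
        Set.inter_eq_left.2 (Set.Ioc_subset_Ioc_right hεa.le)]
    rw [hres]
    have hunion : Set.Ioc (0:ℝ) ε ∪ Set.Ioc ε a = Set.Ioc 0 a :=
      Set.Ioc_union_Ioc_eq_Ioc hε0.le hεa.le
    have hdisj : Disjoint (Set.Ioc (0:ℝ) ε) (Set.Ioc ε a) := Set.Ioc_disjoint_Ioc_of_le le_rfl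
    have := setIntegral_union hdisj measurableSet_Ioc
      (hintA.mono_set (Set.Ioc_subset_Ioc_right hεa.le))
      (hintA.mono_set (Set.Ioc_subset_Ioc_left hε0.le))
    rw [hunion] at this
    rw [this]; ring
  refine Tendsto.congr' (heq.mono fun ε h => h.symm) ?_
  simpa using (tendsto_const_nhds.sub hsmall)
end

section
/- Let μ be a probability measure on [0, a] with cumulative distribution function F(t) = μ([0, t]). Then ∫_{(0,a]} |ln t| dμ(t) < ∞ if and only if ∫_0^a (F(t) − F(0))/t dt < ∞. -/
open MeasureTheory Filter Set

lemma log_int (a b : ℝ) (hb : 0 < b) (hba : b ≤ a) :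
    ∫⁻ t in Set.Ioc b a, ENNReal.ofReal (1/t) = ENNReal.ofReal (Real.log a - Real.log b) := by
  have ha : 0 < a := lt_of_lt_of_le hb hba
  have hint : IntegrableOn (fun t => 1/t) (Set.Ioc b a) volume := by
    apply (ContinuousOn.integrableOn_Icc ?_).mono_set Set.Ioc_subset_Icc_self
    exact continuousOn_const.div continuousOn_id (fun x hx => ne_of_gt (lt_of_lt_of_le hb hx.1))
  rw [← ofReal_integral_eq_lintegral_ofReal hint ?_]
  · congr 1
    rw [← intervalIntegral.integral_of_le hba, integral_one_div ?_,
      Real.log_div (ne_of_gt ha) (ne_of_gt hb)]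
    intro h
    rw [Set.uIcc_of_le hba] at h
    exact absurd h.1 (not_le.2 hb)
  · filter_upwards [ae_restrict_mem measurableSet_Ioc] with t ht
    have : 0 < t := lt_of_lt_of_le hb ht.1.le
    positivity

lemma tonelli (a ε : ℝ) (hε : 0 < ε) (hεa : ε < a) (μ : Measure ℝ) [IsProbabilityMeasure μ] :
    ∫⁻ t in Set.Ioc ε a, μ (Set.Ioc 0 t) * ENNReal.ofReal (1/t) =
    ∫⁻ s in Set.Ioc 0 a, ENNReal.ofReal (Real.log a - Real.log (max ε s)) ∂μ := by
  have ha : 0 < a := hε.trans hεa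
  -- rewrite μ (Ioc 0 t) as lintegral of indicator over Ioc 0 a
  have h1 : ∀ t ∈ Set.Ioc ε a,
      μ (Set.Ioc 0 t) * ENNReal.ofReal (1/t) =
      ∫⁻ s in Set.Ioc 0 a, (Set.Ioc 0 t).indicator (fun _ => ENNReal.ofReal (1/t)) s ∂μ := by
    intro t ht
    rw [lintegral_indicator measurableSet_Ioc, Measure.restrict_restrict measurableSet_Ioc,
      Set.inter_eq_left.2 (Set.Ioc_subset_Ioc le_rfl ht.2), lintegral_const,
      Measure.restrict_apply MeasurableSet.univ, Set.univ_inter, mul_comm]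
  rw [setLIntegral_congr_fun measurableSet_Ioc
    h1]
  -- swap
  have hmeas : AEMeasurable (Function.uncurry fun t s =>
      (Set.Ioc 0 t).indicator (fun _ => ENNReal.ofReal (1/t)) s)
      ((volume.restrict (Set.Ioc ε a)).prod (μ.restrict (Set.Ioc 0 a))) := by
    have : (Function.uncurry fun t s =>
        (Set.Ioc 0 t).indicator (fun _ => ENNReal.ofReal (1/t)) s) =
        Set.indicator {p : ℝ × ℝ | 0 < p.2 ∧ p.2 ≤ p.1} (fun p => ENNReal.ofReal (1/p.1)) := by
      ext p
      simp only [Function.uncurry, Set.indicator, Set.mem_Ioc, Set.mem_setOf_eq]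
    rw [this]
    apply Measurable.aemeasurable
    apply Measurable.indicator
    · exact ((measurable_const.div measurable_fst).ennreal_ofReal)
    · exact ((measurableSet_lt measurable_const measurable_snd).inter
        (measurableSet_le measurable_snd measurable_fst))
  rw [lintegral_lintegral_swap hmeas]
  apply setLIntegral_congr_fun measurableSet_Ioc
  intro s hs
  -- inner: ∫⁻ t in Ioc ε a, indicator (Ioc 0 t) (c t) s
  have h2 : (fun t => (Set.Ioc 0 t).indicator (fun _ => ENNReal.ofReal (1/t)) s)
      =ᵐ[volume.restrict (Set.Ioc ε a)]
      (fun t => (Set.Ioi s).indicator (fun t => ENNReal.ofReal (1/t)) t) := by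
    have : ∀ t, t ≠ s → (Set.Ioc 0 t).indicator (fun _ => ENNReal.ofReal (1/t)) s =
        (Set.Ioi s).indicator (fun t => ENNReal.ofReal (1/t)) t := by
      intro t hts
      simp only [Set.indicator, Set.mem_Ioc, Set.mem_Ioi]
      have : (0 < s ∧ s ≤ t) ↔ s < t := by
        constructor
        · rintro ⟨_, h⟩; exact lt_of_le_of_ne h (Ne.symm hts)
        · intro h; exact ⟨hs.1, h.le⟩
      simp [this]
    apply ae_restrict_of_ae
    filter_upwards [compl_mem_ae_iff.2 ( (by simp : volume {s} = 0))] with t ht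
    exact this t ht
  beta_reduce
  rw [lintegral_congr_ae h2, lintegral_indicator measurableSet_Ioi,
    Measure.restrict_restrict measurableSet_Ioi]
  have hset : Set.Ioi s ∩ Set.Ioc ε a = Set.Ioc (max ε s) a := by
    ext t
    simp only [Set.mem_inter_iff, Set.mem_Ioi, Set.mem_Ioc, max_lt_iff]
    tauto
  rw [hset, log_int a (max ε s) (lt_max_of_lt_left hε) (max_le hεa.le hs.2)]

lemma lint_eq (a ε : ℝ) (hε : 0 < ε) (hεa : ε < a) (μ : Measure ℝ) [IsProbabilityMeasure μ] :
    (∫⁻ s in Set.Ioc 0 a, ENNReal.ofReal (Real.log a - Real.log (max ε s)) ∂μ).toReal =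
    ∫ s in Set.Ioc 0 a, (Real.log a - Real.log (max ε s)) ∂μ := by
  rw [integral_eq_lintegral_of_nonneg_ae]
  · filter_upwards [ae_restrict_mem measurableSet_Ioc] with s hs
    have h1 : 0 < max ε s := lt_max_of_lt_left hε
    have h2 : max ε s ≤ a := max_le hεa.le hs.2
    simp only [Pi.zero_apply, sub_nonneg]
    exact Real.log_le_log h1 h2
  · exact (measurable_const.sub (Real.measurable_log.comp
      (measurable_const.max measurable_id))).aestronglyMeasurable

lemma muIoc_mono (μ : Measure ℝ) [IsProbabilityMeasure μ] :
    Monotone (fun t => (μ (Set.Ioc 0 t)).toReal) := by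
  intro x y hxy
  exact ENNReal.toReal_mono (measure_ne_top μ _)
    (measure_mono (Set.Ioc_subset_Ioc le_rfl hxy))

lemma F_sub (μ : Measure ℝ) [IsProbabilityMeasure μ] (F : ℝ → ℝ)
    (hF : ∀ t, F t = (μ (Set.Icc 0 t)).toReal) (t : ℝ) (ht : 0 ≤ t) :
    F t - F 0 = (μ (Set.Ioc 0 t)).toReal := by
  have h1 : Set.Icc 0 t = insert 0 (Set.Ioc 0 t) := (Set.Ioc_insert_left ht).symm
  have h2 : μ (Set.Icc 0 t) = μ {0} + μ (Set.Ioc 0 t) := by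
    rw [h1, ← Set.singleton_union, measure_union ?_ measurableSet_Ioc]
    simp [Set.disjoint_left]
  rw [hF, hF, h2, Set.Icc_self, ENNReal.toReal_add (measure_ne_top μ _) (measure_ne_top μ _)]
  ring

lemma real_eq (a ε : ℝ) (hε : 0 < ε) (hεa : ε < a) (μ : Measure ℝ) [IsProbabilityMeasure μ]
    (F : ℝ → ℝ) (hF : ∀ t, F t = (μ (Set.Icc 0 t)).toReal) :
    ∫ t in Set.Ioc ε a, (F t - F 0) / t =
    (∫⁻ s in Set.Ioc 0 a, ENNReal.ofReal (Real.log a - Real.log (max ε s)) ∂μ).toReal := by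
  rw [← tonelli a ε hε hεa μ]
  rw [setIntegral_congr_fun measurableSet_Ioc
    (fun t ht => by rw [F_sub μ F hF t (hε.trans ht.1).le])]
  rw [integral_eq_lintegral_of_nonneg_ae ?_ ?_]
  · congr 1
    apply setLIntegral_congr_fun measurableSet_Ioc
    intro t ht
    have htpos : 0 < t := hε.trans ht.1
    beta_reduce
    rw [div_eq_mul_one_div, ENNReal.ofReal_mul ENNReal.toReal_nonneg,
      ENNReal.ofReal_toReal (measure_ne_top μ _)]
  · filter_upwards [ae_restrict_mem measurableSet_Ioc] with t ht
    have htpos : 0 < t := hε.trans ht.1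
    have := ENNReal.toReal_nonneg (a := μ (Set.Ioc 0 t))
    positivity
  · exact ((muIoc_mono μ).measurable.div measurable_id).aestronglyMeasurable

/-- For a probability measure `μ` on `[0,a]` with cumulative distribution function
`F(t) = μ([0,t])`, `∫_{(0,a]} |ln t| dμ(t) < ∞` if and only if the improper integral
`∫_0^a (F(t) − F(0))/t dt` is finite. -/
theorem stmt14 (a : ℝ) (ha : 0 < a) (μ : Measure ℝ) [IsProbabilityMeasure μ]
    (hsupp : μ (Set.Icc 0 a)ᶜ = 0)
    (F : ℝ → ℝ) (hF : ∀ t, F t = (μ (Set.Icc 0 t)).toReal) :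
    MeasureTheory.IntegrableOn (fun t => |Real.log t|) (Set.Ioc 0 a) μ ↔
    (∃ L : ℝ, Filter.Tendsto (fun ε : ℝ => ∫ t in Set.Ioc ε a, (F t - F 0) / t)
      (nhdsWithin 0 (Set.Ioi 0)) (nhds L)) := by
  have hgmeas : Measurable (fun s : ℝ => Real.log a - Real.log s) :=
    measurable_const.sub Real.measurable_log
  constructor
  · -- forward
    intro h
    have hg : IntegrableOn (fun s => Real.log a - Real.log s) (Set.Ioc 0 a) μ := by
      apply Integrable.mono (h.add (integrable_const |Real.log a|))
        hgmeas.aestronglyMeasurable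
      apply Filter.Eventually.of_forall
      intro s
      have : ‖Real.log a - Real.log s‖ ≤ |Real.log s| + |Real.log a| := by
        rw [Real.norm_eq_abs, abs_sub_comm]
        exact (abs_sub _ _).trans le_rfl
      refine this.trans ?_
      rw [Real.norm_eq_abs]
      exact le_abs_self _
    refine ⟨∫ s in Set.Ioc 0 a, (Real.log a - Real.log s) ∂μ, ?_⟩
    have key : Tendsto (fun ε : ℝ => ∫ s in Set.Ioc 0 a, (Real.log a - Real.log (max ε s)) ∂μ)
        (nhdsWithin 0 (Set.Ioi 0)) (nhds (∫ s in Set.Ioc 0 a, (Real.log a - Real.log s) ∂μ)) := by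
      apply tendsto_integral_filter_of_dominated_convergence
        (fun s => Real.log a - Real.log s)
      · apply Filter.Eventually.of_forall
        intro ε
        exact (measurable_const.sub (Real.measurable_log.comp
          (measurable_const.max measurable_id))).aestronglyMeasurable
      · filter_upwards [Ioo_mem_nhdsGT_of_mem ⟨le_rfl, ha⟩] with ε hε
        filter_upwards [ae_restrict_mem measurableSet_Ioc] with s hs
        have h1 : 0 < max ε s := lt_max_of_lt_left hε.1
        have h2 : max ε s ≤ a := max_le hε.2.le hs.2
        rw [Real.norm_eq_abs, abs_of_nonneg (by simpa [sub_nonneg] using Real.log_le_log h1 h2)]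
        have := Real.log_le_log hs.1 (le_max_right ε s)
        linarith
      · exact hg
      · filter_upwards [ae_restrict_mem measurableSet_Ioc] with s hs
        apply Tendsto.congr' ?_ tendsto_const_nhds
        filter_upwards [Ioo_mem_nhdsGT_of_mem ⟨le_rfl, hs.1⟩] with ε hε
        rw [max_eq_right hε.2.le]
    apply key.congr'
    filter_upwards [Ioo_mem_nhdsGT_of_mem ⟨le_rfl, ha⟩] with ε hε
    rw [real_eq a ε hε.1 hε.2 μ F hF, lint_eq a ε hε.1 hε.2 μ]
  · -- backward
    rintro ⟨L, hL⟩
    set ε : ℕ → ℝ := fun n => a / (n + 2) with hεdef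
    have hεpos : ∀ n, 0 < ε n := fun n => by positivity
    have hεlt : ∀ n, ε n < a := by
      intro n
      have h1 : (0:ℝ) ≤ n := Nat.cast_nonneg n
      exact div_lt_self ha (by linarith)
    have hεanti : Antitone ε := by
      intro n m hnm
      have h : (n:ℝ) ≤ m := Nat.cast_le.mpr hnm
      simp only [hεdef]
      gcongr
      all_goals first | exact ha.le | positivity | linarith
    have hεtends : Tendsto ε atTop (nhds 0) := by
      have h1 : Tendsto (fun n : ℕ => ((n:ℝ) + 2)) atTop atTop :=
        tendsto_atTop_add_const_right _ _ tendsto_natCast_atTop_atTop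
      simpa [hεdef, div_eq_mul_inv] using h1.inv_tendsto_atTop.const_mul a
    have hε0 : Tendsto ε atTop (nhdsWithin 0 (Set.Ioi 0)) :=
      tendsto_nhdsWithin_of_tendsto_nhds_of_eventually_within _ hεtends
        (Filter.Eventually.of_forall (fun n => hεpos n))
    set Gn : ℕ → ℝ := fun n => ∫ t in Set.Ioc (ε n) a, (F t - F 0) / t with hGndef
    have hGL : Tendsto Gn atTop (nhds L) := hL.comp hε0
    set fn : ℕ → ℝ → ENNReal :=
      fun n s => ENNReal.ofReal (Real.log a - Real.log (max (ε n) s)) with hfndef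
    have hfn_mono : ∀ s, Monotone (fun n => fn n s) := by
      intro s n m hnm
      apply ENNReal.ofReal_le_ofReal
      apply sub_le_sub_left
      exact Real.log_le_log (lt_max_of_lt_left (hεpos m))
        (max_le_max (hεanti hnm) le_rfl)
    have hfn_ne_top : ∀ n, ∫⁻ s in Set.Ioc 0 a, fn n s ∂μ ≠ ⊤ := by
      intro n
      have hb : ∫⁻ s in Set.Ioc 0 a, fn n s ∂μ ≤
          ∫⁻ _ in Set.Ioc 0 a, ENNReal.ofReal (Real.log a - Real.log (ε n)) ∂μ := by
        apply lintegral_mono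
        intro s
        apply ENNReal.ofReal_le_ofReal
        exact sub_le_sub_left (Real.log_le_log (hεpos n) (le_max_left _ _)) _
      refine ne_top_of_le_ne_top ?_ hb
      rw [setLIntegral_const]
      exact ENNReal.mul_ne_top ENNReal.ofReal_ne_top (measure_ne_top μ _)
    have hGn_eq : ∀ n, Gn n = (∫⁻ s in Set.Ioc 0 a, fn n s ∂μ).toReal := by
      intro n
      rw [hGndef]
      simp only
      rw [real_eq a (ε n) (hεpos n) (hεlt n) μ F hF]
    have h_eq : ∀ n, ∫⁻ s in Set.Ioc 0 a, fn n s ∂μ = ENNReal.ofReal (Gn n) := by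
      intro n
      rw [hGn_eq n, ENNReal.ofReal_toReal (hfn_ne_top n)]
    have hGmono : Monotone Gn := by
      intro n m hnm
      rw [hGn_eq n, hGn_eq m]
      exact ENNReal.toReal_mono (hfn_ne_top m) (lintegral_mono fun s => hfn_mono s hnm)
    have hGle : ∀ n, Gn n ≤ L := fun n => hGmono.ge_of_tendsto hGL n
    have hItop : ∫⁻ s in Set.Ioc 0 a, ENNReal.ofReal (Real.log a - Real.log s) ∂μ ≠ ⊤ := by
      have htend : Tendsto (fun n => ∫⁻ s in Set.Ioc 0 a, fn n s ∂μ) atTop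
          (nhds (∫⁻ s in Set.Ioc 0 a, ENNReal.ofReal (Real.log a - Real.log s) ∂μ)) := by
        apply lintegral_tendsto_of_tendsto_of_monotone
        · intro n
          exact ((measurable_const.sub (Real.measurable_log.comp
            (measurable_const.max measurable_id))).ennreal_ofReal).aemeasurable
        · exact Filter.Eventually.of_forall (fun s => hfn_mono s)
        · filter_upwards [ae_restrict_mem measurableSet_Ioc] with s hs
          apply Tendsto.congr' ?_ tendsto_const_nhds
          filter_upwards [hεtends.eventually (eventually_lt_nhds hs.1)] with n hn
          rw [hfndef]
          simp only
          rw [max_eq_right hn.le]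
      have hle : ∫⁻ s in Set.Ioc 0 a, ENNReal.ofReal (Real.log a - Real.log s) ∂μ ≤
          ENNReal.ofReal L := by
        apply le_of_tendsto htend
        apply Filter.Eventually.of_forall
        intro n
        rw [h_eq n]
        exact ENNReal.ofReal_le_ofReal (hGle n)
      exact ne_top_of_le_ne_top ENNReal.ofReal_ne_top hle
    have hg : IntegrableOn (fun s => Real.log a - Real.log s) (Set.Ioc 0 a) μ := by
      refine ⟨hgmeas.aestronglyMeasurable, ?_⟩
      rw [hasFiniteIntegral_iff_ofReal ?_]
      · exact hItop.lt_top
      · filter_upwards [ae_restrict_mem measurableSet_Ioc] with s hs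
        simpa [sub_nonneg] using Real.log_le_log hs.1 hs.2
    apply Integrable.mono (hg.add (integrable_const |Real.log a|))
      (Real.measurable_log.abs).aestronglyMeasurable
    filter_upwards [ae_restrict_mem measurableSet_Ioc] with s hs
    have h1 : Real.log s ≤ Real.log a := Real.log_le_log hs.1 hs.2
    rw [Real.norm_eq_abs, Real.norm_eq_abs, abs_abs]
    have h2 : |Real.log s| ≤ (Real.log a - Real.log s) + |Real.log a| := by
      have := abs_sub_abs_le_abs_sub (Real.log s) (Real.log a)
      rw [abs_sub_comm, abs_of_nonneg (by linarith : (0:ℝ) ≤ Real.log a - Real.log s)] at this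
      linarith
    refine h2.trans (le_abs_self _)
end
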